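/- arXiv:1812.08159 — 2 statements merged into one kernel-verified Lean document; each statement's English description precedes it below -/
import Mathlib

section
/- Coherent-work additivity of the effective potential: if a unitary V on a bipartite system satisfies [V, H_S⊗1 + 1⊗H_A] = 0 and V(|ψ₀⟩⊗|0⟩) = |ψ₁⟩⊗|ω⟩ with |0⟩ an eigenstate of H_A of eigenvalue 0, then Λ(β,ψ₀) = Λ(β,ψ₁) + Λ(β,ω) for all β, where Λ(β,φ) := −log⟨φ|e^{−βH}|φ⟩ with H the Hamiltonian of the respective subsystem. -/
open scoped Matrix BigOperators

/-- Matrix exponential as a power series. -/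
noncomputable def mexp {ι : Type*} [Fintype ι] [DecidableEq ι] (M : Matrix ι ι ℂ) :
    Matrix ι ι ℂ :=
  ∑' k : ℕ, ((k.factorial : ℂ)⁻¹) • M ^ k

/-- Quadratic form `⟨v, M v⟩`. -/
noncomputable def qform {ι : Type*} [Fintype ι] (M : Matrix ι ι ℂ) (v : ι → ℂ) : ℂ :=
  star v ⬝ᵥ M.mulVec v

/-- The effective potential `Λ(β, v) = −log ⟨v| e^{−βH} |v⟩` of a pure state `v`. -/
noncomputable def effPot {ι : Type*} [Fintype ι] [DecidableEq ι]
    (β : ℝ) (H : Matrix ι ι ℂ) (v : ι → ℂ) : ℝ :=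
  -Real.log (qform (mexp ((-(β : ℂ)) • H)) v).re

open NormedSpace

lemma mexp_eq_exp {ι : Type*} [Fintype ι] [DecidableEq ι] (M : Matrix ι ι ℂ) :
    mexp M = NormedSpace.exp M := by
  rw [NormedSpace.exp_eq_tsum ℂ]; rfl

open Matrix in
/-- pure tensor of vectors -/
def tens {ι κ : Type*} (u : ι → ℂ) (v : κ → ℂ) : ι × κ → ℂ := fun x => u x.1 * v x.2

open Matrix Kronecker in
lemma kron_mulVec {ι κ : Type*} [Fintype ι] [Fintype κ]
    (A : Matrix ι ι ℂ) (B : Matrix κ κ ℂ) (u : ι → ℂ) (v : κ → ℂ) :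
    (A ⊗ₖ B).mulVec (tens u v) = tens (A.mulVec u) (B.mulVec v) := by
  ext ⟨i, k⟩
  simp only [Matrix.mulVec, dotProduct, tens, kroneckerMap_apply]
  rw [Fintype.sum_prod_type, Finset.sum_mul_sum]
  exact Finset.sum_congr rfl fun j _ => Finset.sum_congr rfl fun l _ => by ring

lemma dot_tens {ι κ : Type*} [Fintype ι] [Fintype κ]
    (u p : ι → ℂ) (v q : κ → ℂ) :
    star (tens u v) ⬝ᵥ tens p q = (star u ⬝ᵥ p) * (star v ⬝ᵥ q) := by
  simp only [dotProduct, tens, Pi.star_apply]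
  rw [Fintype.sum_prod_type, Finset.sum_mul_sum]
  exact Finset.sum_congr rfl fun j _ => Finset.sum_congr rfl fun l _ => by
    simp [star_mul']; ring

open Matrix Kronecker in
/-- `A ↦ A ⊗ₖ 1` as an algebra hom. -/
noncomputable def kronRight (ι κ : Type*) [Fintype ι] [DecidableEq ι] [Fintype κ] [DecidableEq κ] :
    Matrix ι ι ℂ →ₐ[ℂ] Matrix (ι × κ) (ι × κ) ℂ where
  toFun A := A ⊗ₖ (1 : Matrix κ κ ℂ)
  map_one' := Matrix.one_kronecker_one
  map_mul' A B := by rw [← Matrix.mul_kronecker_mul, one_mul]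
  map_zero' := Matrix.zero_kronecker _
  map_add' A B := Matrix.add_kronecker A B 1
  commutes' r := by
    simp only [Algebra.algebraMap_eq_smul_one, Matrix.smul_kronecker,
      Matrix.one_kronecker_one]

open Matrix Kronecker in
/-- `B ↦ 1 ⊗ₖ B` as an algebra hom. -/
noncomputable def kronLeft (ι κ : Type*) [Fintype ι] [DecidableEq ι] [Fintype κ] [DecidableEq κ] :
    Matrix κ κ ℂ →ₐ[ℂ] Matrix (ι × κ) (ι × κ) ℂ where
  toFun B := (1 : Matrix ι ι ℂ) ⊗ₖ B
  map_one' := Matrix.one_kronecker_one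
  map_mul' A B := by rw [← Matrix.mul_kronecker_mul, one_mul]
  map_zero' := Matrix.kronecker_zero _
  map_add' A B := Matrix.kronecker_add 1 A B
  commutes' r := by
    simp only [Algebra.algebraMap_eq_smul_one, Matrix.kronecker_smul,
      Matrix.one_kronecker_one]

attribute [local instance] Matrix.linftyOpSemiNormedRing Matrix.linftyOpNormedRing
  Matrix.linftyOpNormedAlgebra

open Matrix Kronecker in
lemma exp_kron {ι κ : Type*} [Fintype ι] [DecidableEq ι] [Fintype κ] [DecidableEq κ]
    (A : Matrix ι ι ℂ) (B : Matrix κ κ ℂ) :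
    NormedSpace.exp (A ⊗ₖ (1 : Matrix κ κ ℂ) + (1 : Matrix ι ι ℂ) ⊗ₖ B)
      = NormedSpace.exp A ⊗ₖ NormedSpace.exp B := by
  have hc : Commute (A ⊗ₖ (1 : Matrix κ κ ℂ)) ((1 : Matrix ι ι ℂ) ⊗ₖ B) := by
    unfold Commute SemiconjBy
    rw [← Matrix.mul_kronecker_mul, ← Matrix.mul_kronecker_mul, one_mul, mul_one, one_mul, mul_one]
  rw [Matrix.exp_add_of_commute _ _ hc]
  have h1 : NormedSpace.exp (A ⊗ₖ (1 : Matrix κ κ ℂ)) = NormedSpace.exp A ⊗ₖ 1 := by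
    have := map_exp (kronRight ι κ) ?_ A
    · exact this.symm
    · exact LinearMap.continuous_of_finiteDimensional (kronRight ι κ).toLinearMap
  have h2 : NormedSpace.exp ((1 : Matrix ι ι ℂ) ⊗ₖ B) = (1 : Matrix ι ι ℂ) ⊗ₖ NormedSpace.exp B := by
    have := map_exp (kronLeft ι κ) ?_ B
    · exact this.symm
    · exact LinearMap.continuous_of_finiteDimensional (kronLeft ι κ).toLinearMap
  rw [h1, h2, ← Matrix.mul_kronecker_mul, mul_one, one_mul]

open Matrix in
lemma qform_exp_real_pos {ι : Type*} [Fintype ι] [DecidableEq ι]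
    {H : Matrix ι ι ℂ} (hH : H.IsHermitian) (β : ℝ) {v : ι → ℂ}
    (hv : ∑ i, ‖v i‖ ^ 2 = 1) :
    ∃ r : ℝ, 0 < r ∧ qform (mexp ((-(β : ℂ)) • H)) v = (r : ℂ) := by
  have hv0 : v ≠ 0 := by
    intro h; rw [h] at hv; simp at hv
  set M : Matrix ι ι ℂ := (-(β : ℂ)) • H with hM
  have hMH : M.IsHermitian := by
    unfold Matrix.IsHermitian
    rw [Matrix.conjTranspose_smul, hH]
    congr 1
    simp
  set U : Matrix ι ι ℂ := (hMH.eigenvectorUnitary : Matrix ι ι ℂ) with hU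
  have hU2 : U * star U = 1 := (Matrix.mem_unitaryGroup_iff).mp hMH.eigenvectorUnitary.2
  have hU1 : star U * U = 1 := (Matrix.mem_unitaryGroup_iff').mp hMH.eigenvectorUnitary.2
  have hUinv : U⁻¹ = star U := Matrix.inv_eq_right_inv hU2
  have hUunit : IsUnit U := ⟨⟨U, star U, hU2, hU1⟩, rfl⟩
  set d : ι → ℂ := fun i => Complex.exp (hMH.eigenvalues i) with hd
  have hexp : mexp M = U * Matrix.diagonal d * star U := by
    rw [mexp_eq_exp]
    conv_lhs => rw [hMH.spectral_theorem, Unitary.conjStarAlgAut_apply]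
    rw [← hUinv, Matrix.exp_conj U _ hUunit, Matrix.exp_diagonal, hUinv]
    congr 2
    ext i
    rw [Pi.exp_def]
    simp only [Function.comp_apply ]
    rw [← Complex.exp_eq_exp_ℂ]
    rfl
  set w : ι → ℂ := star U *ᵥ v with hw
  have hwv : U *ᵥ w = v := by
    rw [hw, Matrix.mulVec_mulVec, hU2, Matrix.one_mulVec]
  have hw0 : w ≠ 0 := by
    intro h; rw [h, Matrix.mulVec_zero] at hwv; exact hv0 hwv.symm
  refine ⟨∑ i, Real.exp (hMH.eigenvalues i) * Complex.normSq (w i), ?_, ?_⟩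
  · obtain ⟨i, hi⟩ := Function.ne_iff.mp hw0
    refine Finset.sum_pos'
      (fun j _ => mul_nonneg (Real.exp_pos _).le (Complex.normSq_nonneg _))
      ⟨i, Finset.mem_univ i, mul_pos (Real.exp_pos _) (Complex.normSq_pos.mpr hi)⟩
  · rw [hexp]
    unfold qform
    rw [← Matrix.mulVec_mulVec, ← Matrix.mulVec_mulVec, Matrix.dotProduct_mulVec]
    have hsw : star v ᵥ* U = star w := by
      rw [hw, Matrix.star_mulVec, Matrix.star_eq_conjTranspose,
        Matrix.conjTranspose_conjTranspose]
    rw [hsw, ← hw]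
    unfold dotProduct
    push_cast
    refine Finset.sum_congr rfl fun i _ => ?_
    rw [Matrix.mulVec_diagonal, Pi.star_apply]
    have : ((Complex.normSq (w i) : ℝ) : ℂ) = (starRingEnd ℂ) (w i) * w i :=
      Complex.normSq_eq_conj_mul_self
    simp only [hd, ← Complex.ofReal_exp, Complex.star_def]
    rw [this]
    ring

open Matrix in
lemma mexp_mulVec_eq_self {ι : Type*} [Fintype ι] [DecidableEq ι]
    (H : Matrix ι ι ℂ) (c : ℂ) {e : ι → ℂ} (he : H *ᵥ e = 0) :
    mexp (c • H) *ᵥ e = e := by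
  set M := c • H with hM
  have hMe : M *ᵥ e = 0 := by rw [hM, Matrix.smul_mulVec, he, smul_zero]
  have hpow : ∀ k : ℕ, M ^ (k + 1) *ᵥ e = 0 := fun k => by
    rw [pow_succ, ← Matrix.mulVec_mulVec, hMe, Matrix.mulVec_zero]
  let f : Matrix ι ι ℂ →ₗ[ℂ] (ι → ℂ) :=
    { toFun := fun N => N *ᵥ e
      map_add' := fun A B => Matrix.add_mulVec A B e
      map_smul' := fun r A => Matrix.smul_mulVec r A e }
  let F := LinearMap.toContinuousLinearMap f
  have hsum : Summable (fun k : ℕ => ((k.factorial : ℂ)⁻¹) • M ^ k) :=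
    NormedSpace.expSeries_summable' M
  have h1 : mexp M *ᵥ e = ∑' k : ℕ, ((k.factorial : ℂ)⁻¹) • (M ^ k *ᵥ e) := by
    have h2 := F.map_tsum hsum
    simpa [F, f, Matrix.smul_mulVec, mexp] using h2
  rw [h1, tsum_eq_single 0 ?_]
  · simp
  · intro k hk
    obtain ⟨j, rfl⟩ := Nat.exists_eq_succ_of_ne_zero hk
    rw [hpow, smul_zero]

open Matrix in
lemma qform_mulVec_invariant {ι : Type*} [Fintype ι] [DecidableEq ι]
    (E V : Matrix ι ι ℂ) (hV₂ : Vᴴ * V = 1) (hc : E * V = V * E) (u : ι → ℂ) :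
    qform E (V *ᵥ u) = qform E u := by
  unfold qform
  rw [Matrix.star_mulVec, Matrix.mulVec_mulVec, ← Matrix.dotProduct_mulVec,
    Matrix.mulVec_mulVec]
  congr 2
  rw [hc, ← mul_assoc, hV₂, Matrix.one_mul]

lemma dot_self_eq_one {ι : Type*} [Fintype ι] {v : ι → ℂ} (hv : ∑ i, ‖v i‖ ^ 2 = 1) :
    star v ⬝ᵥ v = 1 := by
  unfold dotProduct
  have h : ∀ i, (star v) i * v i = ((‖v i‖ ^ 2 : ℝ) : ℂ) := fun i => by
    rw [Pi.star_apply, Complex.star_def, ← Complex.normSq_eq_conj_mul_self,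
      Complex.normSq_eq_norm_sq]
  rw [Finset.sum_congr rfl fun i _ => h i, ← Complex.ofReal_sum, hv, Complex.ofReal_one]

open Matrix Kronecker in
/-- Coherent-work additivity of the effective potential: if an energy-conserving unitary `V`
(commuting with `H_S⊗1 + 1⊗H_A`) maps `|ψ₀⟩⊗|0⟩` to `|ψ₁⟩⊗|ω⟩`, with `|0⟩` a zero-energy
eigenstate of `H_A`, then `Λ(β,ψ₀) = Λ(β,ψ₁) + Λ(β,ω)` for all `β`. -/
theorem stmt18 {m a : ℕ} (HS : Matrix (Fin m) (Fin m) ℂ) (HA : Matrix (Fin a) (Fin a) ℂ)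
    (hHS : HS.IsHermitian) (hHA : HA.IsHermitian)
    (Htot V : Matrix (Fin m × Fin a) (Fin m × Fin a) ℂ)
    (hHtot : Htot = Matrix.of fun x y =>
      HS x.1 y.1 * (if x.2 = y.2 then 1 else 0) + (if x.1 = y.1 then 1 else 0) * HA x.2 y.2)
    (hV₁ : V * Vᴴ = 1) (hV₂ : Vᴴ * V = 1)
    (hcomm : V * Htot = Htot * V)
    (ψ0 ψ1 : Fin m → ℂ) (e0 ω : Fin a → ℂ)
    (hψ0 : ∑ i, ‖ψ0 i‖ ^ 2 = 1) (hψ1 : ∑ i, ‖ψ1 i‖ ^ 2 = 1)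
    (he0n : ∑ j, ‖e0 j‖ ^ 2 = 1) (hωn : ∑ j, ‖ω j‖ ^ 2 = 1)
    (he0 : HA.mulVec e0 = 0)
    (hact : V.mulVec (fun x => ψ0 x.1 * e0 x.2) = fun x => ψ1 x.1 * ω x.2) :
    ∀ β : ℝ, effPot β HS ψ0 = effPot β HS ψ1 + effPot β HA ω := by
  intro β
  set c : ℂ := -(β : ℂ) with hc
  set ES := mexp (c • HS) with hES
  set EA := mexp (c • HA) with hEA
  have hkron : Htot = HS ⊗ₖ (1 : Matrix (Fin a) (Fin a) ℂ)
      + (1 : Matrix (Fin m) (Fin m) ℂ) ⊗ₖ HA := by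
    rw [hHtot]
    ext ⟨i, k⟩ ⟨j, l⟩
    simp [Matrix.kroneckerMap_apply, Matrix.one_apply]
  have hMkron : c • Htot = (c • HS) ⊗ₖ (1 : Matrix (Fin a) (Fin a) ℂ)
      + (1 : Matrix (Fin m) (Fin m) ℂ) ⊗ₖ (c • HA) := by
    rw [hkron, smul_add, Matrix.smul_kronecker, Matrix.kronecker_smul]
  have hexp_tot : mexp (c • Htot) = ES ⊗ₖ EA := by
    rw [hES, hEA, mexp_eq_exp, mexp_eq_exp, mexp_eq_exp, hMkron, exp_kron]
  have hcommE : mexp (c • Htot) * V = V * mexp (c • Htot) := by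
    have hcm : Commute (c • Htot) V :=
      Commute.smul_left (Commute.symm (show Commute V Htot from hcomm)) c
    rw [mexp_eq_exp]
    exact (hcm.exp_left)
  have hVt : V *ᵥ tens ψ0 e0 = tens ψ1 ω := hact
  have h0 : qform (mexp (c • Htot)) (tens ψ0 e0) = qform ES ψ0 := by
    rw [hexp_tot]
    unfold qform
    rw [kron_mulVec, dot_tens, hEA, mexp_mulVec_eq_self HA c he0,
      dot_self_eq_one he0n, mul_one]
  have h1 : qform (mexp (c • Htot)) (tens ψ1 ω) = qform ES ψ1 * qform EA ω := by
    rw [hexp_tot]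
    unfold qform
    rw [kron_mulVec, dot_tens]
  have key : qform ES ψ0 = qform ES ψ1 * qform EA ω := by
    rw [← h0, ← h1, ← hVt, qform_mulVec_invariant _ V hV₂ hcommE]
  obtain ⟨r0, hr0, hq0⟩ := qform_exp_real_pos hHS β hψ0
  obtain ⟨r1, hr1, hq1⟩ := qform_exp_real_pos hHS β hψ1
  obtain ⟨rω, hrω, hqω⟩ := qform_exp_real_pos hHA β hωn
  rw [← hc, ← hES] at hq0 hq1
  rw [← hc, ← hEA] at hqω
  have hr : r0 = r1 * rω := by
    have := key
    rw [hq0, hq1, hqω, ← Complex.ofReal_mul] at this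
    exact_mod_cast this
  unfold effPot
  rw [← hc, ← hES, ← hEA, hq0, hq1, hqω, Complex.ofReal_re, Complex.ofReal_re,
    Complex.ofReal_re, hr, Real.log_mul hr1.ne' hrω.ne']
  ring
end

section
/- Characteristic function factorization for coherent work processes: if V(|ψ⟩_S⊗|0⟩_A) = |φ⟩_S⊗|ω⟩_A with V unitary and [V, H_S⊗1+1⊗H_A]=0, and |0⟩_A has H_A-eigenvalue 0, then for all t ∈ ℝ, ⟨ψ|e^{itH_S}|ψ⟩ = ⟨φ|e^{itH_S}|φ⟩·⟨ω|e^{itH_A}|ω⟩; hence the energy distribution of ψ is the convolution of the energy distributions of φ and ω, and the distribution of ω is uniquely determined by those of ψ and φ. -/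
open scoped Matrix BigOperators Kronecker
open NormedSpace

/-- Characteristic function `t ↦ ⟨v| e^{itH} |v⟩` of the energy measurement of `v`. -/
noncomputable def charFn {ι : Type*} [Fintype ι] [DecidableEq ι]
    (H : Matrix ι ι ℂ) (v : ι → ℂ) (t : ℝ) : ℂ :=
  qform (mexp (((t : ℂ) * Complex.I) • H)) v

attribute [local instance] Matrix.linftyOpNormedRing Matrix.linftyOpNormedAlgebra

section aux
variable {ι κ : Type*} [Fintype ι] [DecidableEq ι] [Fintype κ] [DecidableEq κ]

lemma mexp_eq (M : Matrix ι ι ℂ) : mexp M = exp M := by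
  rw [exp_eq_tsum ℂ]; rfl

lemma qform_add (M N : Matrix ι ι ℂ) (v : ι → ℂ) :
    qform (M + N) v = qform M v + qform N v := by
  simp [qform, Matrix.add_mulVec, dotProduct_add]

lemma qform_smul (c : ℂ) (M : Matrix ι ι ℂ) (v : ι → ℂ) :
    qform (c • M) v = c * qform M v := by
  simp [qform, Matrix.smul_mulVec, dotProduct_smul, smul_eq_mul]

/-- `qform · v` as a continuous linear map. -/
noncomputable def qformL (v : ι → ℂ) : Matrix ι ι ℂ →L[ℂ] ℂ :=
  LinearMap.toContinuousLinearMap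
    { toFun := fun M => qform M v
      map_add' := fun M N => qform_add M N v
      map_smul' := fun c M => qform_smul c M v }

@[simp] lemma qformL_apply (v : ι → ℂ) (M : Matrix ι ι ℂ) : qformL v M = qform M v := rfl

lemma qform_one (v : ι → ℂ) (hv : ∑ i, ‖v i‖ ^ 2 = 1) : qform (1 : Matrix ι ι ℂ) v = 1 := by
  have : qform (1 : Matrix ι ι ℂ) v = ∑ i, (starRingEnd ℂ) (v i) * v i := by
    simp [qform, dotProduct, Matrix.one_mulVec, Pi.star_apply, Complex.star_def]
  rw [this]
  have : ∀ i, (starRingEnd ℂ) (v i) * v i = ((‖v i‖ ^ 2 : ℝ) : ℂ) := by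
    intro i
    rw [mul_comm, Complex.mul_conj']
    norm_cast
  rw [Finset.sum_congr rfl fun i _ => this i]
  rw [← Complex.ofReal_sum, hv, Complex.ofReal_one]

/-- The complex-analytic extension of the characteristic function. -/
noncomputable def charFnC (H : Matrix ι ι ℂ) (v : ι → ℂ) (z : ℂ) : ℂ :=
  qform (mexp ((z * Complex.I) • H)) v

lemma charFnC_real (H : Matrix ι ι ℂ) (v : ι → ℂ) (t : ℝ) :
    charFnC H v (t : ℂ) = charFn H v t := rfl

lemma charFnC_analytic (H : Matrix ι ι ℂ) (v : ι → ℂ) :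
    AnalyticOnNhd ℂ (charFnC H v) Set.univ := by
  intro z _
  have h1 : AnalyticAt ℂ (fun z : ℂ => (z * Complex.I) • H) z :=
    ((analyticAt_id).mul analyticAt_const).smul analyticAt_const
  have h2 : AnalyticAt ℂ (fun z : ℂ => exp ((z * Complex.I) • H)) z :=
    (exp_analytic (𝕂 := ℂ) _).comp h1
  have h3 := ((qformL v).analyticAt _).comp h2
  refine h3.congr ?_
  filter_upwards with w
  simp [charFnC, mexp_eq, Function.comp]
  rfl

lemma charFnC_zero (H : Matrix ι ι ℂ) (v : ι → ℂ) (hv : ∑ i, ‖v i‖ ^ 2 = 1) :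
    charFnC H v 0 = 1 := by
  simp [charFnC, mexp_eq, exp_zero, qform_one v hv]

end aux

section kron
variable {ι κ : Type*} [Fintype ι] [DecidableEq ι] [Fintype κ] [DecidableEq κ]

/-- Left Kronecker embedding as an algebra hom. -/
noncomputable def kronL : Matrix ι ι ℂ →ₐ[ℂ] Matrix (ι × κ) (ι × κ) ℂ where
  toFun A := A ⊗ₖ (1 : Matrix κ κ ℂ)
  map_one' := Matrix.one_kronecker_one
  map_mul' A B := by rw [← Matrix.mul_kronecker_mul, one_mul]
  map_zero' := Matrix.zero_kronecker _
  map_add' A B := Matrix.add_kronecker A B _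
  commutes' c := by
    simp only [Algebra.algebraMap_eq_smul_one]
    show (c • (1 : Matrix ι ι ℂ)) ⊗ₖ (1 : Matrix κ κ ℂ) = c • 1
    rw [Matrix.smul_kronecker, Matrix.one_kronecker_one]

/-- Right Kronecker embedding as an algebra hom. -/
noncomputable def kronR : Matrix κ κ ℂ →ₐ[ℂ] Matrix (ι × κ) (ι × κ) ℂ where
  toFun B := (1 : Matrix ι ι ℂ) ⊗ₖ B
  map_one' := Matrix.one_kronecker_one
  map_mul' A B := by rw [← Matrix.mul_kronecker_mul, one_mul]
  map_zero' := Matrix.kronecker_zero _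
  map_add' A B := Matrix.kronecker_add _ A B
  commutes' c := by
    simp only [Algebra.algebraMap_eq_smul_one]
    show (1 : Matrix ι ι ℂ) ⊗ₖ (c • (1 : Matrix κ κ ℂ)) = c • 1
    rw [Matrix.kronecker_smul, Matrix.one_kronecker_one]

lemma kronL_cont : Continuous (kronL : Matrix ι ι ℂ →ₐ[ℂ] Matrix (ι × κ) (ι × κ) ℂ) :=
  (kronL (κ := κ)).toLinearMap.continuous_of_finiteDimensional

lemma kronR_cont : Continuous (kronR : Matrix κ κ ℂ →ₐ[ℂ] Matrix (ι × κ) (ι × κ) ℂ) :=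
  (kronR (ι := ι)).toLinearMap.continuous_of_finiteDimensional

lemma mexp_kron (A : Matrix ι ι ℂ) (B : Matrix κ κ ℂ) :
    mexp (A ⊗ₖ (1 : Matrix κ κ ℂ) + (1 : Matrix ι ι ℂ) ⊗ₖ B) = mexp A ⊗ₖ mexp B := by
  have hcomm : Commute (A ⊗ₖ (1 : Matrix κ κ ℂ)) ((1 : Matrix ι ι ℂ) ⊗ₖ B) := by
    unfold Commute SemiconjBy
    rw [← Matrix.mul_kronecker_mul, ← Matrix.mul_kronecker_mul, one_mul, mul_one, one_mul, mul_one]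
  rw [mexp_eq, mexp_eq, mexp_eq]
  erw [exp_add_of_commute hcomm]
  have h1 : exp (A ⊗ₖ (1 : Matrix κ κ ℂ)) = exp A ⊗ₖ (1 : Matrix κ κ ℂ) :=
    (map_exp (kronL : Matrix ι ι ℂ →ₐ[ℂ] Matrix (ι × κ) (ι × κ) ℂ) kronL_cont A).symm
  have h2 : exp ((1 : Matrix ι ι ℂ) ⊗ₖ B) = (1 : Matrix ι ι ℂ) ⊗ₖ exp B :=
    (map_exp (kronR : Matrix κ κ ℂ →ₐ[ℂ] Matrix (ι × κ) (ι × κ) ℂ) kronR_cont B).symm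
  erw [h1, h2]
  rw [← Matrix.mul_kronecker_mul, one_mul, mul_one]

lemma qform_kron (M : Matrix ι ι ℂ) (N : Matrix κ κ ℂ) (u : ι → ℂ) (v : κ → ℂ) :
    qform (M ⊗ₖ N) (fun x : ι × κ => u x.1 * v x.2) = qform M u * qform N v := by
  have hmv : ∀ x : ι × κ, (M ⊗ₖ N).mulVec (fun x : ι × κ => u x.1 * v x.2) x
      = M.mulVec u x.1 * N.mulVec v x.2 := by
    intro x
    simp only [Matrix.mulVec, dotProduct, Matrix.kronecker_apply, Fintype.sum_prod_type]
    rw [Finset.sum_mul_sum]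
    exact Finset.sum_congr rfl fun i _ => Finset.sum_congr rfl fun j _ => by
      rw [Matrix.kroneckerMap_apply]; ring
  simp only [qform]
  simp only [dotProduct, hmv, Fintype.sum_prod_type, Pi.star_apply, star_mul']
  rw [Finset.sum_mul_sum]
  exact Finset.sum_congr rfl fun i _ => Finset.sum_congr rfl fun j _ => by ring

end kron

section main
variable {ι : Type*} [Fintype ι] [DecidableEq ι]

lemma qform_mexp_zero_energy (c : ℂ) (A : Matrix ι ι ℂ) (v : ι → ℂ)
    (hA : A.mulVec v = 0) (hv : ∑ i, ‖v i‖ ^ 2 = 1) :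
    qform (mexp (c • A)) v = 1 := by
  have hsum : Summable fun k : ℕ => ((k.factorial : ℂ)⁻¹) • (c • A) ^ k := by
    have := NormedSpace.expSeries_summable' (𝕂 := ℂ) (c • A)
    exact this
  have hmap : qform (mexp (c • A)) v
      = ∑' k : ℕ, ((k.factorial : ℂ)⁻¹) * qform ((c • A) ^ k) v := by
    have := (qformL v).map_tsum hsum
    simpa [mexp, qform_smul] using this
  have hpow : ∀ k : ℕ, k ≠ 0 → (A ^ k).mulVec v = 0 := by
    intro k hk
    obtain ⟨n, rfl⟩ := Nat.exists_eq_succ_of_ne_zero hk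
    induction n with
    | zero => simpa using hA
    | succ n ih =>
      rw [pow_succ, ← Matrix.mulVec_mulVec, hA, Matrix.mulVec_zero]
  have hterm : ∀ k : ℕ, k ≠ 0 → ((k.factorial : ℂ)⁻¹) * qform ((c • A) ^ k) v = 0 := by
    intro k hk
    rw [smul_pow, qform_smul]
    simp [qform, hpow k hk]
  rw [hmap, tsum_eq_single 0 hterm]
  simp [qform_one v hv]

lemma qform_mexp_unitary {c : ℂ} {W H : Matrix ι ι ℂ} (hW : Wᴴ * W = 1)
    (hcomm : W * H = H * W) (w : ι → ℂ) :
    qform (mexp (c • H)) (W.mulVec w) = qform (mexp (c • H)) w := by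
  have hcommE : W * mexp (c • H) = mexp (c • H) * W := by
    have hc : Commute W H := hcomm
    have h1 : Commute W (c • H) := hc.smul_right c
    have := (h1.exp_right)
    rw [mexp_eq]
    exact this
  have key : Wᴴ * (mexp (c • H) * W) = mexp (c • H) := by
    rw [← hcommE, ← mul_assoc, hW, one_mul]
  rw [qform, Matrix.star_mulVec, Matrix.mulVec_mulVec, Matrix.dotProduct_mulVec,
    Matrix.vecMul_vecMul, ← Matrix.dotProduct_mulVec, key]
  rfl

end main

/-- Cancellation of a common analytic factor on the reals. -/
lemma analytic_cancel {F G H : ℂ → ℂ}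
    (hF : AnalyticOnNhd ℂ F Set.univ) (hG : AnalyticOnNhd ℂ G Set.univ)
    (hH : AnalyticOnNhd ℂ H Set.univ) (hF0 : F 0 = 1)
    (h : ∀ t : ℝ, F t * G t = F t * H t) : ∀ t : ℝ, G t = H t := by
  have hne : ∀ᶠ z in nhds (0 : ℂ), F z ≠ 0 := by
    have hc : ContinuousAt F 0 := (hF 0 (Set.mem_univ _)).continuousAt
    exact hc.eventually_ne (by rw [hF0]; exact one_ne_zero)
  set u : ℕ → ℂ := fun n => (((n : ℝ) + 1)⁻¹ : ℝ) with hu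
  have hu0 : Filter.Tendsto u Filter.atTop (nhds (0 : ℂ)) := by
    have : Filter.Tendsto (fun n : ℕ => ((n : ℝ) + 1)⁻¹) Filter.atTop (nhds 0) :=
      tendsto_one_div_add_atTop_nhds_zero_nat.congr (by intro n; rw [one_div])
    have := (Complex.continuous_ofReal.tendsto 0).comp this
    simpa [hu, Function.comp_def] using this
  have hune : ∀ n, u n ≠ 0 := by
    intro n
    simp only [hu, ne_eq, Complex.ofReal_eq_zero]
    positivity
  have hu0' : Filter.Tendsto u Filter.atTop (nhdsWithin (0 : ℂ) {(0:ℂ)}ᶜ) := by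
    rw [tendsto_nhdsWithin_iff]
    exact ⟨hu0, Filter.Eventually.of_forall fun n => hune n⟩
  have hev : ∀ᶠ n in Filter.atTop, G (u n) = H (u n) := by
    filter_upwards [hu0.eventually hne] with n hn
    have := h (((n : ℝ) + 1)⁻¹)
    exact mul_left_cancel₀ hn (by simpa [hu] using this)
  have hfreq : ∃ᶠ z in nhdsWithin (0 : ℂ) {(0:ℂ)}ᶜ, G z = H z :=
    hu0'.frequently hev.frequently
  have := hG.eq_of_frequently_eq hH hfreq
  intro t; rw [this]

lemma factor_charFn {m a : ℕ} (HS : Matrix (Fin m) (Fin m) ℂ) (HA : Matrix (Fin a) (Fin a) ℂ)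
    (Htot V' : Matrix (Fin m × Fin a) (Fin m × Fin a) ℂ)
    (hK : Htot = HS ⊗ₖ (1 : Matrix (Fin a) (Fin a) ℂ) + (1 : Matrix (Fin m) (Fin m) ℂ) ⊗ₖ HA)
    (hV₂ : V'ᴴ * V' = 1) (hcomm : V' * Htot = Htot * V')
    (ψ φ : Fin m → ℂ) (e0 ω' : Fin a → ℂ)
    (he0n : ∑ j, ‖e0 j‖ ^ 2 = 1) (he0 : HA.mulVec e0 = 0)
    (hact : V'.mulVec (fun x => ψ x.1 * e0 x.2) = fun x => φ x.1 * ω' x.2) :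
    ∀ t : ℝ, charFn HS ψ t = charFn HS φ t * charFn HA ω' t := by
  intro t
  set c : ℂ := (t : ℂ) * Complex.I with hc
  have hsmul : c • Htot = (c • HS) ⊗ₖ (1 : Matrix (Fin a) (Fin a) ℂ)
      + (1 : Matrix (Fin m) (Fin m) ℂ) ⊗ₖ (c • HA) := by
    rw [hK, smul_add, Matrix.smul_kronecker, Matrix.kronecker_smul]
  have hmk : mexp (c • Htot) = mexp (c • HS) ⊗ₖ mexp (c • HA) := by
    rw [hsmul, mexp_kron]
  have h1 : qform (mexp (c • Htot)) (fun x : Fin m × Fin a => ψ x.1 * e0 x.2)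
      = charFn HS ψ t := by
    rw [hmk, qform_kron, qform_mexp_zero_energy c HA e0 he0 he0n, mul_one]
    rfl
  have h2 : qform (mexp (c • Htot)) (fun x : Fin m × Fin a => ψ x.1 * e0 x.2)
      = charFn HS φ t * charFn HA ω' t := by
    rw [← qform_mexp_unitary hV₂ hcomm, hact, hmk, qform_kron]
    rfl
  rw [← h1, h2]

/-- Characteristic function factorization for coherent work processes: if an energy-conserving
unitary `V` maps `|ψ⟩⊗|0⟩` to `|φ⟩⊗|ω⟩` with `|0⟩` a zero-energy eigenstate of `H_A`, then
`⟨ψ|e^{itH_S}|ψ⟩ = ⟨φ|e^{itH_S}|φ⟩·⟨ω|e^{itH_A}|ω⟩` for all `t`; hence the energy distribution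
of `ω` is uniquely determined: any other `ω'` arising from such a process with the same `ψ, φ`
has the same characteristic function. -/
theorem stmt19 {m a : ℕ} (HS : Matrix (Fin m) (Fin m) ℂ) (HA : Matrix (Fin a) (Fin a) ℂ)
    (hHS : HS.IsHermitian) (hHA : HA.IsHermitian)
    (Htot V : Matrix (Fin m × Fin a) (Fin m × Fin a) ℂ)
    (hHtot : Htot = Matrix.of fun x y =>
      HS x.1 y.1 * (if x.2 = y.2 then 1 else 0) + (if x.1 = y.1 then 1 else 0) * HA x.2 y.2)
    (hV₁ : V * Vᴴ = 1) (hV₂ : Vᴴ * V = 1)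
    (hcomm : V * Htot = Htot * V)
    (ψ φ : Fin m → ℂ) (e0 ω : Fin a → ℂ)
    (hψ : ∑ i, ‖ψ i‖ ^ 2 = 1) (hφ : ∑ i, ‖φ i‖ ^ 2 = 1)
    (he0n : ∑ j, ‖e0 j‖ ^ 2 = 1) (hωn : ∑ j, ‖ω j‖ ^ 2 = 1)
    (he0 : HA.mulVec e0 = 0)
    (hact : V.mulVec (fun x => ψ x.1 * e0 x.2) = fun x => φ x.1 * ω x.2) :
    (∀ t : ℝ, charFn HS ψ t = charFn HS φ t * charFn HA ω t) ∧
    (∀ (V' : Matrix (Fin m × Fin a) (Fin m × Fin a) ℂ) (ω' : Fin a → ℂ),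
      V' * V'ᴴ = 1 → V'ᴴ * V' = 1 → V' * Htot = Htot * V' →
      (∑ j, ‖ω' j‖ ^ 2 = 1) →
      V'.mulVec (fun x => ψ x.1 * e0 x.2) = (fun x => φ x.1 * ω' x.2) →
      ∀ t : ℝ, charFn HA ω' t = charFn HA ω t) := by
  have hK : Htot = HS ⊗ₖ (1 : Matrix (Fin a) (Fin a) ℂ)
      + (1 : Matrix (Fin m) (Fin m) ℂ) ⊗ₖ HA := by
    rw [hHtot]
    ext x y
    simp [Matrix.kroneckerMap_apply, Matrix.one_apply]
  have part1 := factor_charFn HS HA Htot V hK hV₂ hcomm ψ φ e0 ω he0n he0 hact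
  refine ⟨part1, ?_⟩
  intro V' ω' hV'₁ hV'₂ hcomm' hω'n hact' t
  have part1' := factor_charFn HS HA Htot V' hK hV'₂ hcomm' ψ φ e0 ω' he0n he0 hact'
  have hmul : ∀ s : ℝ, charFnC HS φ (s : ℂ) * charFnC HA ω' (s : ℂ)
      = charFnC HS φ (s : ℂ) * charFnC HA ω (s : ℂ) := by
    intro s
    rw [charFnC_real, charFnC_real, charFnC_real, ← part1' s, part1 s]
  have := analytic_cancel (charFnC_analytic HS φ) (charFnC_analytic HA ω')
    (charFnC_analytic HA ω) (charFnC_zero HS φ hφ) hmul t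
  rw [← charFnC_real, ← charFnC_real, this]
end
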